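/- Let A be an admissible pseudo-Hermitian n×n matrix with eigenvalues λ_p ≥ … ≥ λ_1 > μ_1 ≥ … ≥ μ_q, and fix integers 1 ≤ i_1 < i_2 < … < i_m ≤ p. There exists a flag V_{i_1} ⊂ V_{i_2} ⊂ … ⊂ V_{i_m} of subspaces of ℂⁿ with dim V_{i_j} = i_j and V_{i_m}∖{0} ⊆ ℂⁿ₊ such that every system x_1, …, x_m subordinate to the flag satisfies Σ_{j=1}^m x_j†·A·x_j ≤ Σ_{j=1}^m λ_{i_j}. (Indeed V_{i_j} = span{v_1, …, v_{i_j}} works, where v_1, …, v_p are pseudo-orthonormal eigenvectors for λ_1, …, λ_p.) -/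
import Mathlib


open Matrix

/-- The signature matrix `J = diag(1,…,1,−1,…,−1)` with `p` ones and `q` minus-ones. -/
noncomputable def Jmat (p q : ℕ) : Matrix (Fin (p + q)) (Fin (p + q)) ℂ :=
  Matrix.diagonal (fun i => if (i : ℕ) < p then 1 else -1)

/-- The indefinite pairing `⟨z,w⟩ = Σ_{i<p} z_i conj(w_i) − Σ_{i≥p} z_i conj(w_i)`;
equivalently `w† · z` where `x† = (J conj(x))ᵀ`. -/
noncomputable def pairing (p q : ℕ) (z w : Fin (p + q) → ℂ) : ℂ :=
  ∑ i : Fin (p + q),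
    (if (i : ℕ) < p then z i * (starRingEnd ℂ) (w i) else -(z i * (starRingEnd ℂ) (w i)))

/-- The diagonal entries of `Λ = diag(λ_p, …, λ_1, μ_1, …, μ_q)`, where `lam` and `mu`
are 0-indexed: `lam i = λ_{i+1}` and `mu j = μ_{j+1}`. -/
noncomputable def diagEntries (p q : ℕ) (lam : Fin p → ℝ) (mu : Fin q → ℝ) :
    Fin (p + q) → ℂ :=
  fun i =>
    if h : (i : ℕ) < p then ((lam ⟨p - 1 - (i : ℕ), by omega⟩ : ℝ) : ℂ)
    else ((mu ⟨(i : ℕ) - p, by have := i.isLt; omega⟩ : ℝ) : ℂ)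

/-- `A` is an admissible pseudo-Hermitian matrix with (real) eigenvalues
`λ_p ≥ … ≥ λ_1 > μ_1 ≥ … ≥ μ_q`, recorded 0-indexed as `lam i = λ_{i+1}` (so `lam` is
monotone) and `mu j = μ_{j+1}` (so `mu` is antitone), with `λ_1 > μ_1`, and
`A = U Λ U⁻¹` for some invertible `U` with `U J Uᴴ = J`. -/
def IsAdmissible (p q : ℕ) (hp : 0 < p) (hq : 0 < q)
    (A : Matrix (Fin (p + q)) (Fin (p + q)) ℂ)
    (lam : Fin p → ℝ) (mu : Fin q → ℝ) : Prop :=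
  A * Jmat p q = Jmat p q * A.conjTranspose ∧
  Monotone lam ∧ Antitone mu ∧ mu ⟨0, hq⟩ < lam ⟨0, hp⟩ ∧
  ∃ U : Matrix (Fin (p + q)) (Fin (p + q)) ℂ,
    IsUnit U ∧ U * Jmat p q * U.conjTranspose = Jmat p q ∧
    A = U * Matrix.diagonal (diagEntries p q lam mu) * U⁻¹

/-- The Rayleigh ratio `R_A(x) = (x† A x)/(x† x)`, as a real number (for admissible
pseudo-Hermitian `A` both `x† A x` and `x† x` are real). -/
noncomputable def rayleigh (p q : ℕ) (A : Matrix (Fin (p + q)) (Fin (p + q)) ℂ)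
    (x : Fin (p + q) → ℂ) : ℝ :=
  (pairing p q (A.mulVec x) x).re / (pairing p q x x).re

/-- A flag `V_{i_1} ⊂ V_{i_2} ⊂ ⋯ ⊂ V_{i_m}` of complex subspaces of `ℂⁿ` with
`dim V_{i_j} = i_j` (here `idx : Fin m → Fin p` is 0-indexed, so `i_j = idx j + 1`)
and `V_{i_m} ∖ {0} ⊆ ℂⁿ₊`. -/
def IsFlag (p q m : ℕ) (hm : 0 < m) (idx : Fin m → Fin p)
    (V : Fin m → Submodule ℂ (Fin (p + q) → ℂ)) : Prop :=
  (∀ j k : Fin m, j < k → V j < V k) ∧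
  (∀ j, Module.finrank ℂ (V j) = (idx j : ℕ) + 1) ∧
  (∀ x ∈ V ⟨m - 1, by omega⟩, x ≠ 0 → 0 < (pairing p q x x).re)

/-- A system of vectors `x_1, …, x_m` subordinate to the flag `V`: `x_j ∈ V_{i_j}`
and `⟨x_j, x_k⟩ = δ_{jk}`. -/
def IsSubordinate (p q m : ℕ) (V : Fin m → Submodule ℂ (Fin (p + q) → ℂ))
    (x : Fin m → Fin (p + q) → ℂ) : Prop :=
  (∀ j, x j ∈ V j) ∧ ∀ j k, pairing p q (x j) (x k) = if j = k then 1 else 0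

lemma Jmat_mul_Jmat (p q : ℕ) : Jmat p q * Jmat p q = 1 := by
  rw [Jmat, diagonal_mul_diagonal, ← diagonal_one]
  refine congrArg Matrix.diagonal ?_
  funext i
  by_cases h : (i : ℕ) < p <;> simp [h]

lemma pairing_eq_dot (p q : ℕ) (z w : Fin (p + q) → ℂ) :
    pairing p q z w = star w ⬝ᵥ (Jmat p q *ᵥ z) := by
  unfold pairing dotProduct
  refine Finset.sum_congr rfl fun i _ => ?_
  rw [Jmat, mulVec_diagonal]
  by_cases h : (i : ℕ) < p <;> simp [h, Pi.star_apply] <;> ring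

lemma pairing_mulVec (p q : ℕ) (U : Matrix (Fin (p + q)) (Fin (p + q)) ℂ)
    (h : U.conjTranspose * Jmat p q * U = Jmat p q) (y z : Fin (p + q) → ℂ) :
    pairing p q (U *ᵥ y) (U *ᵥ z) = pairing p q y z := by
  rw [pairing_eq_dot, pairing_eq_dot, star_mulVec, mulVec_mulVec, dotProduct_mulVec,
    vecMul_vecMul, ← Matrix.mul_assoc, h, dotProduct_mulVec]

lemma sum_single_apply {p q : ℕ} {ι : Type*} [Fintype ι] [DecidableEq ι]
    (g : ι → Fin (p + q)) (hg : Function.Injective g) (c : ι → ℂ) (s : ι) :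
    (∑ t, c t • (Pi.single (g t) (1:ℂ) : Fin (p + q) → ℂ)) (g s) = c s := by
  classical
  rw [Finset.sum_apply]
  have : ∀ t, (c t • (Pi.single (g t) (1:ℂ) : Fin (p + q) → ℂ)) (g s) = if s = t then c t else 0 := by
    intro t
    by_cases h : s = t
    · subst h; simp
    · have : g s ≠ g t := fun hh => h (hg hh)
      simp [Pi.single_apply, this, h]
  simp_rw [this]
  simp

lemma sum_single_apply_ne {p q : ℕ} {ι : Type*} [Fintype ι] [DecidableEq ι]
    (g : ι → Fin (p + q)) (c : ι → ℂ) (i : Fin (p + q)) (hi : ∀ t, g t ≠ i) :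
    (∑ t, c t • (Pi.single (g t) (1:ℂ) : Fin (p + q) → ℂ)) i = 0 := by
  classical
  rw [Finset.sum_apply]
  refine Finset.sum_eq_zero fun t _ => ?_
  simp [Pi.single_apply, (hi t).symm]

lemma pairing_weighted {p q : ℕ} {ι : Type*} [Fintype ι] [DecidableEq ι]
    (g : ι → Fin (p + q)) (hg : Function.Injective g) (hgp : ∀ t, ((g t : ℕ) < p))
    (d : Fin (p + q) → ℂ) (c c' : ι → ℂ) :
    pairing p q (fun i => d i * (∑ t, c t • (Pi.single (g t) (1:ℂ) : Fin (p + q) → ℂ)) i)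
      (∑ t, c' t • (Pi.single (g t) (1:ℂ) : Fin (p + q) → ℂ)) =
      ∑ t, d (g t) * (c t * (starRingEnd ℂ) (c' t)) := by
  classical
  unfold pairing
  rw [← Finset.sum_subset (Finset.subset_univ (Finset.univ.image g))]
  · rw [Finset.sum_image (fun a _ b _ h => hg h)]
    refine Finset.sum_congr rfl fun t _ => ?_
    simp only []
    rw [if_pos (hgp t), sum_single_apply g hg c t, sum_single_apply g hg c' t]
    ring
  · intro i _ hi
    have hne : ∀ t, g t ≠ i := by
      intro t ht
      exact hi (Finset.mem_image.2 ⟨t, Finset.mem_univ t, ht⟩)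
    rw [sum_single_apply_ne g c' i hne]
    simp

lemma pairing_plain {p q : ℕ} {ι : Type*} [Fintype ι] [DecidableEq ι]
    (g : ι → Fin (p + q)) (hg : Function.Injective g) (hgp : ∀ t, ((g t : ℕ) < p))
    (c c' : ι → ℂ) :
    pairing p q (∑ t, c t • (Pi.single (g t) (1:ℂ) : Fin (p + q) → ℂ)) (∑ t, c' t • (Pi.single (g t) (1:ℂ) : Fin (p + q) → ℂ)) =
      ∑ t, c t * (starRingEnd ℂ) (c' t) := by
  have h := pairing_weighted g hg hgp (fun _ => 1) c c'
  have e : (fun i => (1:ℂ) * (∑ t, c t • (Pi.single (g t) (1:ℂ) : Fin (p + q) → ℂ)) i) =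
      (∑ t, c t • (Pi.single (g t) (1:ℂ) : Fin (p + q) → ℂ)) := by
    funext i; rw [one_mul]
  rw [e] at h
  simpa using h

/-- there is a flag `V_{i_1} ⊂ ⋯ ⊂ V_{i_m}` (with `dim V_{i_j} = i_j`
and `V_{i_m}∖{0} ⊆ ℂⁿ₊`) such that every subordinate system `x_1, …, x_m` satisfies
`Σ_j x_j† A x_j ≤ Σ_j λ_{i_j}`. -/
theorem exists_flag_with_small_subordinate_sums
    (p q : ℕ) (hp : 0 < p) (hq : 0 < q)
    (A : Matrix (Fin (p + q)) (Fin (p + q)) ℂ)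
    (lam : Fin p → ℝ) (mu : Fin q → ℝ)
    (hA : IsAdmissible p q hp hq A lam mu)
    (m : ℕ) (hm : 0 < m) (idx : Fin m → Fin p) (hidx : StrictMono idx) :
    ∃ V : Fin m → Submodule ℂ (Fin (p + q) → ℂ), IsFlag p q m hm idx V ∧
      ∀ x : Fin m → Fin (p + q) → ℂ, IsSubordinate p q m V x →
        ∑ j : Fin m, (pairing p q (A.mulVec (x j)) (x j)).re ≤
          ∑ j : Fin m, lam (idx j) := by

  classical
  obtain ⟨hpH, hlamMono, hmuAnti, hlm, U, hU, hUJ, hAeq⟩ := hA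
  have hJJ := Jmat_mul_Jmat p q
  have hUdet : IsUnit U.det := (Matrix.isUnit_iff_isUnit_det U).mp hU
  have hUinv : U⁻¹ * U = 1 := Matrix.nonsing_inv_mul U hUdet
  have hUinv' : U * U⁻¹ = 1 := Matrix.mul_nonsing_inv U hUdet
  have h1 : Jmat p q * U.conjTranspose = U⁻¹ * Jmat p q := by
    calc Jmat p q * U.conjTranspose = (U⁻¹ * U) * (Jmat p q * U.conjTranspose) := by
          rw [hUinv, one_mul]
      _ = U⁻¹ * (U * Jmat p q * U.conjTranspose) := by simp only [Matrix.mul_assoc]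
      _ = U⁻¹ * Jmat p q := by rw [hUJ]
  have hUH : U.conjTranspose = Jmat p q * (U⁻¹ * Jmat p q) := by
    calc U.conjTranspose = 1 * U.conjTranspose := (one_mul _).symm
      _ = (Jmat p q * Jmat p q) * U.conjTranspose := by rw [hJJ]
      _ = Jmat p q * (Jmat p q * U.conjTranspose) := Matrix.mul_assoc _ _ _
      _ = Jmat p q * (U⁻¹ * Jmat p q) := by rw [h1]
  have hUJU : U.conjTranspose * Jmat p q * U = Jmat p q := by
    rw [hUH]
    calc (Jmat p q * (U⁻¹ * Jmat p q)) * Jmat p q * U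
        = Jmat p q * (U⁻¹ * ((Jmat p q * Jmat p q) * U)) := by simp only [Matrix.mul_assoc]
      _ = Jmat p q * (U⁻¹ * U) := by rw [hJJ, one_mul]
      _ = Jmat p q := by rw [hUinv, Matrix.mul_one]
  set D : Matrix (Fin (p + q)) (Fin (p + q)) ℂ := Matrix.diagonal (diagEntries p q lam mu)
    with hD
  have hAmul : ∀ y : Fin (p + q) → ℂ, A *ᵥ (U *ᵥ y) = U *ᵥ (D *ᵥ y) := by
    intro y
    have hM : U * D * U⁻¹ * U = U * D := by
      calc U * D * U⁻¹ * U = U * D * (U⁻¹ * U) := by simp only [Matrix.mul_assoc]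
        _ = U * D := by rw [hUinv, Matrix.mul_one]
    rw [mulVec_mulVec, mulVec_mulVec, hAeq, hM]
  -- columns
  have hcollt : ∀ k : Fin p, p - 1 - (k : ℕ) < p + q := fun k => by have := k.isLt; omega
  set col : Fin p → Fin (p + q) := fun k => ⟨p - 1 - (k : ℕ), hcollt k⟩ with hcoldef
  have hcolinj : Function.Injective col := by
    intro a b hab
    have h := congrArg Fin.val hab
    simp only [hcoldef] at h
    have ha := a.isLt; have hb := b.isLt
    exact Fin.ext (by omega)
  have hembp : ∀ (j : Fin m) (t : Fin ((idx j : ℕ) + 1)), (t : ℕ) < p := by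
    intro j t
    have := t.isLt; have := (idx j).isLt; omega
  set g : ∀ j : Fin m, Fin ((idx j : ℕ) + 1) → Fin (p + q) :=
    fun j t => col ⟨(t : ℕ), hembp j t⟩ with hgdef
  have hginj : ∀ j, Function.Injective (g j) := by
    intro j a b hab
    have h2 := congrArg Fin.val (hcolinj hab)
    exact Fin.ext h2
  have hgp : ∀ (j : Fin m) (t : Fin ((idx j : ℕ) + 1)), ((g j t : ℕ) < p) := by
    intro j t
    simp only [hgdef, hcoldef]
    omega
  set w : ∀ j : Fin m, Fin ((idx j : ℕ) + 1) → (Fin (p + q) → ℂ) :=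
    fun j t => U *ᵥ (Pi.single (g j t) (1 : ℂ) : Fin (p + q) → ℂ) with hwdef
  set V : Fin m → Submodule ℂ (Fin (p + q) → ℂ) :=
    fun j => Submodule.span ℂ (Set.range (w j)) with hVdef
  have hlin : ∀ (j : Fin m) (c : Fin ((idx j : ℕ) + 1) → ℂ),
      U *ᵥ (∑ t, c t • (Pi.single (g j t) (1 : ℂ) : Fin (p + q) → ℂ)) = ∑ t, c t • w j t := by
    intro j c
    rw [← Matrix.mulVecLin_apply, map_sum]
    refine Finset.sum_congr rfl fun t _ => ?_
    rw [LinearMap.map_smul, Matrix.mulVecLin_apply]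
  have hpair : ∀ (j : Fin m) (c c' : Fin ((idx j : ℕ) + 1) → ℂ),
      pairing p q (∑ t, c t • w j t) (∑ t, c' t • w j t)
        = ∑ t, c t * (starRingEnd ℂ) (c' t) := by
    intro j c c'
    rw [← hlin, ← hlin, pairing_mulVec p q U hUJU,
      pairing_plain (g j) (hginj j) (hgp j)]
  have hApair : ∀ (j : Fin m) (c : Fin ((idx j : ℕ) + 1) → ℂ),
      pairing p q (A *ᵥ (∑ t, c t • w j t)) (∑ t, c t • w j t)
        = ∑ t : Fin ((idx j : ℕ) + 1), ((lam ⟨(t : ℕ), hembp j t⟩ : ℝ) : ℂ) * (c t * (starRingEnd ℂ) (c t)) := by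
    intro j c
    rw [← hlin, hAmul, pairing_mulVec p q U hUJU]
    have hdv : D *ᵥ (∑ t, c t • (Pi.single (g j t) (1 : ℂ) : Fin (p + q) → ℂ))
        = fun i => diagEntries p q lam mu i *
            (∑ t, c t • (Pi.single (g j t) (1 : ℂ) : Fin (p + q) → ℂ)) i := by
      funext i
      rw [hD, mulVec_diagonal]
    rw [hdv, pairing_weighted (g j) (hginj j) (hgp j)]
    refine Finset.sum_congr rfl fun t _ => ?_
    congr 1
    have hgt : ((g j t : ℕ)) < p := hgp j t
    rw [diagEntries, dif_pos hgt]
    norm_cast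
    congr 1
    have h1 : (g j t : ℕ) = p - 1 - (t : ℕ) := rfl
    have h2 := hembp j t
    exact Fin.ext (by simp only [h1]; omega)
  -- linear independence and rank
  have hw_li : ∀ j, LinearIndependent ℂ (w j) := by
    intro j
    have hb := (Pi.basisFun ℂ (Fin (p + q))).linearIndependent
    have h1 : LinearIndependent ℂ
        (fun t : Fin ((idx j : ℕ) + 1) => (Pi.single (g j t) (1 : ℂ) : Fin (p + q) → ℂ)) := by
      have h2 := hb.comp (g j) (hginj j)
      have he : (⇑(Pi.basisFun ℂ (Fin (p + q))) ∘ g j)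
          = fun t : Fin ((idx j : ℕ) + 1) => (Pi.single (g j t) (1 : ℂ) : Fin (p + q) → ℂ) := by
        funext t
        simp [Function.comp, Pi.basisFun_apply]
      rwa [he] at h2
    have hker : LinearMap.ker U.mulVecLin = ⊥ := by
      rw [LinearMap.ker_eq_bot]
      rw [show (U.mulVecLin : (Fin (p + q) → ℂ) → (Fin (p + q) → ℂ)) = U.mulVec from rfl]
      exact Matrix.mulVec_injective_iff_isUnit.mpr hU
    have h3 := h1.map' U.mulVecLin hker
    have : (U.mulVecLin ∘ fun t : Fin ((idx j : ℕ) + 1) =>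
        (Pi.single (g j t) (1 : ℂ) : Fin (p + q) → ℂ)) = w j := by
      funext t
      simp only [Function.comp, Matrix.mulVecLin_apply, hwdef]
    rwa [this] at h3
  have hrank : ∀ j, Module.finrank ℂ (V j) = (idx j : ℕ) + 1 := by
    intro j
    rw [hVdef]
    rw [finrank_span_eq_card (hw_li j), Fintype.card_fin]
  have hle : ∀ j k : Fin m, j ≤ k → V j ≤ V k := by
    intro j k hjk
    rw [hVdef]
    apply Submodule.span_le.mpr
    rintro _ ⟨t, rfl⟩
    have hik : (idx j : ℕ) ≤ (idx k : ℕ) := hidx.monotone hjk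
    have hlt : (t : ℕ) < (idx k : ℕ) + 1 := by have := t.isLt; omega
    have hwe : w j t = w k ⟨(t : ℕ), hlt⟩ := rfl
    rw [hwe]
    exact Submodule.subset_span ⟨⟨(t : ℕ), hlt⟩, rfl⟩
  refine ⟨V, ⟨?_, fun j => hrank j, ?_⟩, ?_⟩
  · -- strict chain
    intro j k hjk
    refine lt_of_le_of_ne (hle j k (le_of_lt hjk)) fun h => ?_
    have h1 := hrank j
    have h2 := hrank k
    rw [h] at h1
    rw [h1] at h2
    have := hidx hjk
    omega
  · -- positivity
    intro x hx hx0
    obtain ⟨c, hc⟩ := (Submodule.mem_span_range_iff_exists_fun ℂ).mp hx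
    have hcne : ∃ t, c t ≠ 0 := by
      by_contra h
      push_neg at h
      apply hx0
      rw [← hc]
      exact Finset.sum_eq_zero fun t _ => by rw [h t, zero_smul]
    obtain ⟨t0, ht0⟩ := hcne
    have he : pairing p q x x = ∑ t, c t * (starRingEnd ℂ) (c t) := by
      rw [← hc]; exact hpair _ c c
    rw [he, Complex.re_sum]
    have : ∀ t, (c t * (starRingEnd ℂ) (c t)).re = Complex.normSq (c t) := by
      intro t
      rw [Complex.mul_conj]
      simp
    simp_rw [this]
    exact Finset.sum_pos' (fun t _ => Complex.normSq_nonneg _)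
      ⟨t0, Finset.mem_univ t0, Complex.normSq_pos.mpr ht0⟩
  · -- subordinate bound
    intro x hsub
    obtain ⟨hmem, horth⟩ := hsub
    refine Finset.sum_le_sum fun j _ => ?_
    obtain ⟨c, hc⟩ := (Submodule.mem_span_range_iff_exists_fun ℂ).mp (hmem j)
    have h1 : pairing p q (x j) (x j) = 1 := by
      have := horth j j
      rwa [if_pos rfl] at this
    have hsum1 : ∑ t, Complex.normSq (c t) = 1 := by
      have h2 : pairing p q (x j) (x j) = ∑ t, c t * (starRingEnd ℂ) (c t) := by
        rw [← hc]; exact hpair j c c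
      rw [h1] at h2
      have h3 := congrArg Complex.re h2
      rw [Complex.re_sum] at h3
      simp_rw [Complex.mul_conj] at h3
      simpa using h3.symm
    have h2 : (pairing p q (A *ᵥ x j) (x j)).re
        = ∑ t : Fin ((idx j : ℕ) + 1), lam ⟨(t : ℕ), hembp j t⟩ * Complex.normSq (c t) := by
      rw [← hc, hApair j c, Complex.re_sum]
      refine Finset.sum_congr rfl fun t _ => ?_
      rw [Complex.mul_conj]
      norm_cast
    rw [show A.mulVec (x j) = A *ᵥ x j from rfl, h2]
    calc ∑ t : Fin ((idx j : ℕ) + 1), lam ⟨(t : ℕ), hembp j t⟩ * Complex.normSq (c t)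
        ≤ ∑ t : Fin ((idx j : ℕ) + 1), lam (idx j) * Complex.normSq (c t) := by
          refine Finset.sum_le_sum fun t _ => ?_
          refine mul_le_mul_of_nonneg_right ?_ (Complex.normSq_nonneg _)
          refine hlamMono ?_
          rw [Fin.le_def]
          exact Nat.lt_succ_iff.mp t.isLt
      _ = lam (idx j) * ∑ t, Complex.normSq (c t) := (Finset.mul_sum _ _ _).symm
      _ = lam (idx j) := by rw [hsum1, mul_one]
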